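/- Let G₁ and G₂ be finite connected simple graphs, each having at least two vertices and containing no well-connected vertex. Then the connective eccentric index of the symmetric difference G₁ ⊕ G₂ equals |E(G₁)|·|V(G₂)|² + |E(G₂)|·|V(G₁)|² − 4·|E(G₁)|·|E(G₂)|. -/

import Mathlib

/-- The eccentricity of a vertex `v` in a finite graph `G`:
the maximum distance from `v` to any other vertex. -/
noncomputable def eccentricity {V : Type*} [Fintype V] (G : SimpleGraph V) (v : V) : ℕ :=
  Finset.univ.sup fun u => G.dist v u

/-- The connective eccentric index `C^ξ(G) = ∑_v deg(v)/ε(v)`, as a rational number. -/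
noncomputable def connEccIndex {V : Type*} [Fintype V] (G : SimpleGraph V) : ℚ :=
  letI := Classical.decRel G.Adj
  ∑ v : V, (G.degree v : ℚ) / (eccentricity G v)

/-- The number of edges of `G`. -/
noncomputable def numEdges {V : Type*} (G : SimpleGraph V) : ℕ := G.edgeSet.ncard

/-- A vertex is well-connected if it is adjacent to every other vertex. -/
def IsWellConnected {V : Type*} (G : SimpleGraph V) (v : V) : Prop :=
  ∀ u : V, u ≠ v → G.Adj v u

/-- The symmetric difference `G₁ ⊕ G₂`: vertex set `V(G₁) × V(G₂)`, where `(u₁,u₂)` is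
adjacent to `(v₁,v₂)` iff exactly one of `u₁ ~ v₁` in `G₁`, `u₂ ~ v₂` in `G₂` holds. -/
def symDiffGraph {V W : Type*} (G : SimpleGraph V) (H : SimpleGraph W) :
    SimpleGraph (V × W) where
  Adj x y := Xor' (G.Adj x.1 y.1) (H.Adj x.2 y.2)
  symm := by
    refine ⟨?_⟩
    intro x y h
    rcases h with ⟨h1, h2⟩ | ⟨h1, h2⟩
    · exact Or.inl ⟨G.adj_symm h1, fun hc => h2 (H.adj_symm hc)⟩
    · exact Or.inr ⟨H.adj_symm h1, fun hc => h2 (G.adj_symm hc)⟩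
  loopless := by
    refine ⟨?_⟩
    intro x h
    rcases h with ⟨h1, _⟩ | ⟨h1, _⟩
    · exact G.loopless.irrefl _ h1
    · exact H.loopless.irrefl _ h1

set_option linter.unusedSectionVars false

section sdAux
variable {V W : Type*} [Fintype V] [Fintype W] (G : SimpleGraph V) (H : SimpleGraph W)

lemma exists_adj_of_connected (h : G.Connected) (hc : 2 ≤ Fintype.card V) (u : V) :
    ∃ a, G.Adj u a := by
  obtain ⟨u', hne⟩ := Fintype.exists_ne_of_one_lt_card hc u
  obtain ⟨w⟩ := h.preconnected u u'
  cases w with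
  | nil => exact absurd rfl hne
  | cons h _ => exact ⟨_, h⟩

lemma symDiff_adj (x y : V × W) :
    (symDiffGraph G H).Adj x y ↔ Xor' (G.Adj x.1 y.1) (H.Adj x.2 y.2) := Iff.rfl

lemma symDiff_middle (hGconn : G.Connected) (hHconn : H.Connected)
    (hV : 2 ≤ Fintype.card V) (hW : 2 ≤ Fintype.card W)
    (x y : V × W) (hn : ¬ (symDiffGraph G H).Adj x y) :
    ∃ m, (symDiffGraph G H).Adj x m ∧ (symDiffGraph G H).Adj m y := by
  obtain ⟨u, v⟩ := x
  obtain ⟨u', v'⟩ := y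
  rw [symDiff_adj] at hn
  have hn : G.Adj u u' ↔ H.Adj v v' := by
    have hn' : ¬((G.Adj u u' ∧ ¬H.Adj v v') ∨ (H.Adj v v' ∧ ¬G.Adj u u')) := hn
    tauto
  by_cases hp : G.Adj u u'
  · -- both adjacent: middle (u', v)
    have hq : H.Adj v v' := hn.mp hp
    exact ⟨(u', v), Or.inl ⟨hp, fun h => H.loopless.irrefl v h⟩,
      Or.inr ⟨hq, fun h => G.loopless.irrefl u' h⟩⟩
  · have hq : ¬ H.Adj v v' := fun h => hp (hn.mpr h)
    obtain ⟨a, ha⟩ := exists_adj_of_connected G hGconn hV u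
    obtain ⟨b, hb⟩ := exists_adj_of_connected H hHconn hW v'
    by_cases h1 : G.Adj u' a
    · exact ⟨(a, v), Or.inl ⟨ha, fun h => H.loopless.irrefl v h⟩,
        Or.inl ⟨h1.symm, fun h => hq h⟩⟩
    · by_cases h2 : H.Adj v b
      · exact ⟨(u, b), Or.inr ⟨h2, fun h => G.loopless.irrefl u h⟩,
          Or.inr ⟨hb.symm, fun h => hp h⟩⟩
      · exact ⟨(a, b), Or.inl ⟨ha, h2⟩,
          Or.inr ⟨hb.symm, fun h => h1 h.symm⟩⟩

lemma symDiff_dist_le_two (hGconn : G.Connected) (hHconn : H.Connected)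
    (hV : 2 ≤ Fintype.card V) (hW : 2 ≤ Fintype.card W) (x y : V × W) :
    (symDiffGraph G H).dist x y ≤ 2 := by
  by_cases hadj : (symDiffGraph G H).Adj x y
  · calc (symDiffGraph G H).dist x y ≤ hadj.toWalk.length := SimpleGraph.dist_le _
    _ ≤ 2 := by simp
  · obtain ⟨m, h1, h2⟩ := symDiff_middle G H hGconn hHconn hV hW x y hadj
    calc (symDiffGraph G H).dist x y ≤ (SimpleGraph.Walk.cons h1 h2.toWalk).length :=
        SimpleGraph.dist_le _
    _ ≤ 2 := by simp


lemma symDiff_ecc_two (hGconn : G.Connected) (hHconn : H.Connected)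
    (hV : 2 ≤ Fintype.card V) (hW : 2 ≤ Fintype.card W)
    (hG : ∀ v : V, ¬ IsWellConnected G v) (x : V × W) :
    eccentricity (symDiffGraph G H) x = 2 := by
  apply le_antisymm
  · exact Finset.sup_le fun y _ => symDiff_dist_le_two G H hGconn hHconn hV hW x y
  · have hwc := hG x.1
    rw [IsWellConnected] at hwc
    push_neg at hwc
    obtain ⟨u', hu'ne, hu'na⟩ := hwc
    set y : V × W := (u', x.2) with hy
    have hxy : x ≠ y := by
      intro h
      exact hu'ne (by rw [h])
    have hnadj : ¬ (symDiffGraph G H).Adj x y := by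
      rw [symDiff_adj]
      rintro (⟨h1, _⟩ | ⟨h1, _⟩)
      · exact hu'na h1
      · exact H.loopless.irrefl _ h1
    obtain ⟨m, h1, h2⟩ := symDiff_middle G H hGconn hHconn hV hW x y hnadj
    have hreach : (symDiffGraph G H).Reachable x y := ⟨SimpleGraph.Walk.cons h1 h2.toWalk⟩
    have hd0 : (symDiffGraph G H).dist x y ≠ 0 :=
      SimpleGraph.dist_ne_zero_iff_ne_and_reachable.mpr ⟨hxy, hreach⟩
    have hd1 : (symDiffGraph G H).dist x y ≠ 1 :=
      fun h => hnadj (SimpleGraph.dist_eq_one_iff_adj.mp h)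
    have h2le : 2 ≤ (symDiffGraph G H).dist x y := by omega
    exact le_trans h2le (Finset.le_sup (Finset.mem_univ y))

lemma degree_cast_eq_sum {V : Type*} [Fintype V] (G : SimpleGraph V)
    [DecidableRel G.Adj] (u : V) :
    (G.degree u : ℚ) = ∑ a : V, if G.Adj u a then (1:ℚ) else 0 := by
  rw [SimpleGraph.degree, SimpleGraph.neighborFinset_eq_filter, Finset.sum_boole]

lemma double_sum_helper (f : V → ℚ) (g : W → ℚ) :
    ∑ a : V, ∑ b : W, (f a + g b - 2 * f a * g b)
      = (∑ a : V, f a) * (Fintype.card W : ℚ) + (∑ b : W, g b) * (Fintype.card V : ℚ)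
        - 2 * (∑ a : V, f a) * (∑ b : W, g b) := by
  simp only [Finset.sum_sub_distrib, Finset.sum_add_distrib, Finset.sum_const,
    ← Finset.mul_sum, ← Finset.sum_mul, nsmul_eq_mul, Finset.card_univ]
  ring

lemma symDiff_degree [DecidableRel G.Adj] [DecidableRel H.Adj]
    [DecidableRel (symDiffGraph G H).Adj] (u : V) (v : W) :
    ((symDiffGraph G H).degree (u, v) : ℚ) =
      (G.degree u : ℚ) * (Fintype.card W : ℚ) + (H.degree v : ℚ) * (Fintype.card V : ℚ)
        - 2 * (G.degree u : ℚ) * (H.degree v : ℚ) := by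
  rw [degree_cast_eq_sum, Fintype.sum_prod_type]
  have step1 : ∀ a : V, ∀ b : W,
      (if (symDiffGraph G H).Adj (u, v) (a, b) then (1:ℚ) else 0) =
        ((fun a => if G.Adj u a then (1:ℚ) else 0) a
          + (fun b => if H.Adj v b then (1:ℚ) else 0) b
          - 2 * (fun a => if G.Adj u a then (1:ℚ) else 0) a
            * (fun b => if H.Adj v b then (1:ℚ) else 0) b) := by
    intro a b
    by_cases hp : G.Adj u a <;> by_cases hq : H.Adj v b <;>
      simp [symDiff_adj, Xor', hp, hq] <;> norm_num
  rw [Finset.sum_congr rfl fun a _ => Finset.sum_congr rfl fun b _ => step1 a b,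
    double_sum_helper, ← degree_cast_eq_sum, ← degree_cast_eq_sum]

end sdAux

section main
variable {V W : Type*} [Fintype V] [Fintype W] (G : SimpleGraph V) (H : SimpleGraph W)

lemma double_sum_helper2 (f : V → ℚ) (g : W → ℚ) :
    ∑ a : V, ∑ b : W, (f a * (Fintype.card W : ℚ) + g b * (Fintype.card V : ℚ)
        - 2 * f a * g b)
      = (∑ a : V, f a) * (Fintype.card W : ℚ) ^ 2
        + (∑ b : W, g b) * (Fintype.card V : ℚ) ^ 2
        - 2 * (∑ a : V, f a) * (∑ b : W, g b) := by
  simp only [Finset.sum_sub_distrib, Finset.sum_add_distrib, Finset.sum_const,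
    ← Finset.mul_sum, ← Finset.sum_mul, nsmul_eq_mul, Finset.card_univ]
  ring

lemma numEdges_eq_card [DecidableRel G.Adj] : numEdges G = G.edgeFinset.card := by
  rw [numEdges, Set.ncard_eq_toFinset_card']
  congr 1

lemma sum_degree_cast [DecidableRel G.Adj] :
    ∑ u : V, (G.degree u : ℚ) = 2 * (numEdges G : ℚ) := by
  rw [numEdges_eq_card]
  exact_mod_cast G.sum_degrees_eq_twice_card_edges

end main


/-- The connective eccentric index of the symmetric difference of two connected graphs
without well-connected vertices equals
`|E(G₁)||V(G₂)|² + |E(G₂)||V(G₁)|² − 4|E(G₁)||E(G₂)|`. -/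
theorem connEccIndex_symDiff {V W : Type*} [Fintype V] [Fintype W]
    (G : SimpleGraph V) (H : SimpleGraph W)
    (hGconn : G.Connected) (hHconn : H.Connected)
    (hV : 2 ≤ Fintype.card V) (hW : 2 ≤ Fintype.card W)
    (hG : ∀ v : V, ¬ IsWellConnected G v) (hH : ∀ w : W, ¬ IsWellConnected H w) :
    connEccIndex (symDiffGraph G H) =
      (numEdges G : ℚ) * (Fintype.card W : ℚ) ^ 2
        + (numEdges H : ℚ) * (Fintype.card V : ℚ) ^ 2
        - 4 * (numEdges G : ℚ) * (numEdges H : ℚ) := by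
  classical
  have hecc : ∀ x : V × W, eccentricity (symDiffGraph G H) x = 2 :=
    symDiff_ecc_two G H hGconn hHconn hV hW hG
  rw [connEccIndex]
  letI := Classical.decRel (symDiffGraph G H).Adj
  calc ∑ x : V × W, ((symDiffGraph G H).degree x : ℚ) / (eccentricity (symDiffGraph G H) x)
      = (∑ x : V × W, ((symDiffGraph G H).degree x : ℚ)) / 2 := by
        rw [Finset.sum_div]
        refine Finset.sum_congr rfl fun x _ => ?_
        rw [hecc x]
        norm_num
    _ = (2 * (numEdges G : ℚ) * (Fintype.card W : ℚ) ^ 2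
          + 2 * (numEdges H : ℚ) * (Fintype.card V : ℚ) ^ 2
          - 2 * (2 * (numEdges G : ℚ)) * (2 * (numEdges H : ℚ))) / 2 := by
        rw [Fintype.sum_prod_type,
          Finset.sum_congr rfl fun u _ => Finset.sum_congr rfl fun v _ =>
            symDiff_degree G H u v,
          double_sum_helper2, sum_degree_cast, sum_degree_cast]
    _ = _ := by ring
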